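/- For every integer m = k ≥ 1 there exists a continuous function f : [0,1]^m → [0,1]^k such that the lower-scaled oscillation l_f(x) is finite for every x ∈ [0,1]^m, and for every y ∈ [0,1]^k the level set f⁻¹(y) is infinite. -/

import Mathlib

open Set MeasureTheory Metric Filter
open scoped ENNReal NNReal Topology

/-- Lower-scaled oscillation of `f` with domain `A`:
`l_f(x) = liminf_{r→0⁺} (sup_{y ∈ A, dist y x ≤ r} dist (f y) (f x)) / r`. -/
noncomputable def lowerScaledOsc {E F : Type*} [PseudoMetricSpace E] [PseudoMetricSpace F]
    (A : Set E) (f : E → F) (x : E) : ℝ≥0∞ :=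
  Filter.liminf
    (fun r : ℝ =>
      (⨆ (y : E) (_ : y ∈ A) (_ : dist y x ≤ r), ENNReal.ofReal (dist (f y) (f x))) /
        ENNReal.ofReal r)
    (nhdsWithin 0 (Set.Ioi 0))

/-- Upper-scaled oscillation of `f` with domain `A`:
`L_f(x) = limsup_{r→0⁺} (sup_{y ∈ A, dist y x ≤ r} dist (f y) (f x)) / r`. -/
noncomputable def upperScaledOsc {E F : Type*} [PseudoMetricSpace E] [PseudoMetricSpace F]
    (A : Set E) (f : E → F) (x : E) : ℝ≥0∞ :=
  Filter.limsup
    (fun r : ℝ =>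
      (⨆ (y : E) (_ : y ∈ A) (_ : dist y x ≤ r), ENNReal.ofReal (dist (f y) (f x))) /
        ENNReal.ofReal r)
    (nhdsWithin 0 (Set.Ioi 0))


open Set Filter

namespace SO

/-- number of grid points at level j -/
def n (j : ℕ) : ℕ := 2 * 4 ^ j

/-- scale denominator -/
noncomputable def q (j : ℕ) : ℝ := 4 ^ (j + 1)

/-- grid value -/
noncomputable def cc (j i : ℕ) : ℝ := (2 * i + 1) / q j

/-- plateau length -/
noncomputable def pp (j : ℕ) : ℝ := ((64 : ℝ) ^ (j + 1))⁻¹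

/-- dip amplitude -/
noncomputable def dd (j : ℕ) : ℝ := 2 / q j

/-- count of level-j grid points below x -/
noncomputable def NN (j : ℕ) (x : ℝ) : ℕ :=
  ((Finset.range (n j)).filter (fun i => cc j i < x)).card

/-- total plateau length inserted below value x -/
noncomputable def sg (x : ℝ) : ℝ := ∑' j, pp j * NN j x

/-- plateau start position -/
noncomputable def SS (j i : ℕ) : ℝ := cc j i + sg (cc j i)

noncomputable def ramp (j i : ℕ) (x : ℝ) : ℝ := min (pp j) (max 0 (x - SS j i))

noncomputable def Aj (j : ℕ) (x : ℝ) : ℝ := ∑ i ∈ Finset.range (n j), ramp j i x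

noncomputable def AA (x : ℝ) : ℝ := ∑' j, Aj j x

noncomputable def D1 (j i : ℕ) : ℝ := min (dd j) (cc j i)
noncomputable def D2 (j i : ℕ) : ℝ := min (dd j) (1 - cc j i)

/-- tent: 0 at a, 1 at b, 0 at c, linear in between, 0 outside [a,c] -/
noncomputable def tent (a b c x : ℝ) : ℝ := max 0 (min ((x - a) / (b - a)) ((c - x) / (c - b)))

noncomputable def Wt (j i : ℕ) (x : ℝ) : ℝ :=
  -(D1 j i) * tent (SS j i) (SS j i + pp j / 4) (SS j i + pp j / 2) x
  + (D2 j i) * tent (SS j i + pp j / 2) (SS j i + 3 * pp j / 4) (SS j i + pp j) x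

noncomputable def Wj (j : ℕ) (x : ℝ) : ℝ := ∑ i ∈ Finset.range (n j), Wt j i x

noncomputable def WW (x : ℝ) : ℝ := ∑' j, Wj j x

noncomputable def FF (x : ℝ) : ℝ := x - AA x + WW x

noncomputable def f1 (u : ℝ) : ℝ := max 0 (min 1 (FF (2 * u)))

/- ------------------ basic positivity facts ------------------ -/

lemma q_pos (j : ℕ) : 0 < q j := by unfold q; positivity
lemma pp_pos (j : ℕ) : 0 < pp j := by unfold pp; positivity
lemma dd_pos (j : ℕ) : 0 < dd j := by unfold dd q; positivity

lemma cc_pos {j i : ℕ} : 0 < cc j i := by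
  unfold cc q; positivity

lemma cc_lt_one {j i : ℕ} (hi : i < n j) : cc j i < 1 := by
  unfold cc q
  rw [div_lt_one (by positivity)]
  have : (i : ℝ) ≤ 2 * 4 ^ j - 1 := by
    have : (i : ℝ) + 1 ≤ 2 * 4 ^ j := by
      have := (Nat.add_one_le_iff.mpr hi)
      calc (i:ℝ) + 1 = ((i+1 : ℕ) : ℝ) := by push_cast; ring
        _ ≤ ((n j : ℕ) : ℝ) := by exact_mod_cast Nat.cast_le.mpr this
        _ = 2 * 4 ^ j := by unfold n; push_cast; ring
    linarith
  have h4 : (4:ℝ) ^ (j+1) = 4 * 4 ^ j := by ring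
  nlinarith [this]

lemma pp_le_q (j : ℕ) : pp j ≤ 1 / (2 * q j) := by
  unfold pp q
  rw [one_div]
  apply inv_anti₀ (by positivity)
  have h : (64:ℝ) ^ (j+1) = 16 ^ (j+1) * 4 ^ (j+1) := by
    rw [← mul_pow]; norm_num
  have h2 : (16:ℝ) ^ (j+1) ≥ 2 := by
    calc (16:ℝ) ^ (j+1) = 16 * 16 ^ j := by ring
      _ ≥ 16 * 1 := by
          have : (1:ℝ) ≤ 16 ^ j := one_le_pow₀ (by norm_num)
          nlinarith
      _ ≥ 2 := by norm_num
  have h3 : (0:ℝ) < 4 ^ (j+1) := by positivity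
  nlinarith

lemma dd_eq (j : ℕ) : dd j = 2 / q j := rfl

end SO

namespace SO

/- ------------------ separation of grid values ------------------ -/

lemma cc_sep_aux {j i j' i' : ℕ} (hjj : j ≤ j') (hne : (j, i) ≠ (j', i')) :
    1 / q j' ≤ |cc j i - cc j' i'| := by
  have hq' : (0:ℝ) < q j' := q_pos j'
  set K : ℤ := (2 * i + 1) * 4 ^ (j' - j) - (2 * i' + 1) with hK
  have hKne : K ≠ 0 := by
    rcases eq_or_lt_of_le hjj with h | h
    · subst h
      have hii : i ≠ i' := by
        intro h; exact hne (by rw [h])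
      simp only [hK, Nat.sub_self, pow_zero, mul_one]
      intro hc
      apply hii
      omega
    · have he : Even ((2 * (i:ℤ) + 1) * 4 ^ (j' - j)) := by
        have : Even ((4:ℤ) ^ (j' - j)) := by
          rw [Int.even_pow]
          exact ⟨by decide, by omega⟩
        exact this.mul_left _
      have ho : Odd ((2 * (i':ℤ) + 1)) := ⟨i', by ring⟩
      have : Odd K := by
        have := he.sub_odd ho
        convert this using 2 <;> push_cast <;> ring
      intro hc
      rw [hc] at this
      exact (Int.not_odd_iff_even.mpr Even.zero) this
  have hKabs : (1:ℝ) ≤ |(K:ℝ)| := by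
    rw [← Int.cast_abs]
    exact_mod_cast Int.one_le_abs hKne
  have h4 : (4:ℝ) ^ (j' - j) * 4 ^ (j + 1) = 4 ^ (j' + 1) := by
    rw [← pow_add]
    congr 1
    omega
  have e1 : cc j i = ((2 * (i:ℝ) + 1) * 4 ^ (j' - j)) / q j' := by
    unfold cc q
    rw [div_eq_div_iff (by positivity) (by positivity)]
    push_cast
    rw [mul_assoc, h4]
  have hnum : ((K:ℝ)) = (2 * (i:ℝ) + 1) * 4 ^ (j' - j) - (2 * (i':ℝ) + 1) := by
    simp only [hK]
    push_cast
    ring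
  have hcalc : cc j i - cc j' i' = (K:ℝ) / q j' := by
    rw [e1, show cc j' i' = (2 * (i':ℝ) + 1) / q j' from rfl, div_sub_div_same, ← hnum]
  rw [hcalc, abs_div, abs_of_pos hq']
  gcongr
  
lemma cc_sep {j i j' i' : ℕ} (hne : (j, i) ≠ (j', i')) :
    1 / q (max j j') ≤ |cc j i - cc j' i'| := by
  rcases le_total j j' with h | h
  · rw [max_eq_right h]; exact cc_sep_aux h hne
  · rw [max_eq_left h, abs_sub_comm]
    exact cc_sep_aux h (by simp only [ne_eq, Prod.mk.injEq, not_and] at hne ⊢; tauto)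

lemma cc_ne {j i j' i' : ℕ} (hne : (j, i) ≠ (j', i')) : cc j i ≠ cc j' i' := by
  intro h
  have h1 := cc_sep hne
  rw [h, sub_self, abs_zero] at h1
  have hq := q_pos (max j j')
  have : (0:ℝ) < 1 / q (max j j') := by positivity
  linarith

/- ------------------ summability ------------------ -/

lemma npp_eq (j : ℕ) : (n j : ℝ) * pp j = (1/32) * (1/16)^j := by
  unfold n pp
  have h64 : (64:ℝ) ^ (j+1) = 2 * 4^j * (32 * 16^j) := by
    have h1 : (64:ℝ)^j = 4^j * 16^j := by rw [← mul_pow]; norm_num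
    rw [pow_succ, h1]; ring
  rw [h64]
  push_cast
  have h4 : (4:ℝ)^j ≠ 0 := by positivity
  have h16 : (16:ℝ)^j ≠ 0 := by positivity
  field_simp
  rw [← mul_pow]; norm_num

lemma summable_npp : Summable (fun j => (n j : ℝ) * pp j) := by
  simp only [npp_eq]
  exact (summable_geometric_of_lt_one (by norm_num) (by norm_num)).mul_left _

lemma tsum_npp_le : (∑' j, (n j : ℝ) * pp j) ≤ 1/30 := by
  simp only [npp_eq]
  rw [tsum_mul_left, tsum_geometric_of_lt_one (by norm_num) (by norm_num)]
  norm_num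

lemma NN_le (j : ℕ) (x : ℝ) : NN j x ≤ n j := by
  unfold NN
  exact le_trans (Finset.card_filter_le _ _) (by rw [Finset.card_range])

lemma term_nonneg (j : ℕ) (x : ℝ) : 0 ≤ pp j * NN j x := by
  have := pp_pos j; positivity

lemma term_le (j : ℕ) (x : ℝ) : pp j * NN j x ≤ (n j : ℝ) * pp j := by
  rw [mul_comm ((n j : ℝ))]
  apply mul_le_mul_of_nonneg_left _ (le_of_lt (pp_pos j))
  exact_mod_cast NN_le j x

lemma summable_sg (x : ℝ) : Summable (fun j => pp j * NN j x) := by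
  exact Summable.of_nonneg_of_le (fun b => term_nonneg b x) (fun b => term_le b x) summable_npp

lemma sg_nonneg (x : ℝ) : 0 ≤ sg x :=
  tsum_nonneg (fun j => term_nonneg j x)

lemma sg_le (x : ℝ) : sg x ≤ 1/30 :=
  le_trans (Summable.tsum_le_tsum (term_le · x) (summable_sg x) summable_npp) tsum_npp_le

lemma NN_mono (j : ℕ) {x y : ℝ} (h : x ≤ y) : NN j x ≤ NN j y := by
  apply Finset.card_le_card
  intro i hi
  simp only [NN, Finset.mem_filter] at *
  exact ⟨hi.1, lt_of_lt_of_le hi.2 h⟩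

lemma sg_mono {x y : ℝ} (h : x ≤ y) : sg x ≤ sg y := by
  apply Summable.tsum_le_tsum _ (summable_sg x) (summable_sg y)
  intro j
  have := pp_pos j
  have := NN_mono j h
  have h2 : (NN j x : ℝ) ≤ NN j y := by exact_mod_cast this
  nlinarith

lemma NN_lt {j i : ℕ} (hi : i < n j) {y : ℝ} (hy : cc j i < y) :
    NN j (cc j i) < NN j y := by
  apply Finset.card_lt_card
  constructor
  · intro i' hi'
    simp only [NN, Finset.mem_filter] at *
    exact ⟨hi'.1, lt_trans hi'.2 hy⟩
  · intro hsub
    have hmem : i ∈ (Finset.range (n j)).filter (fun i' => cc j i' < y) := by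
      simp only [Finset.mem_filter, Finset.mem_range]
      exact ⟨hi, hy⟩
    have := hsub hmem
    simp only [Finset.mem_filter] at this
    exact lt_irrefl _ this.2

/-- the key gap estimate: if `cc j i < cc j' i'` then the plateau of `(j,i)`,
including its full length, plus the value gap, fits below `SS j' i'`. -/
lemma SS_gap {j i j' i' : ℕ} (hi : i < n j) (hi' : i' < n j')
    (hlt : cc j i < cc j' i') :
    SS j i + pp j + (cc j' i' - cc j i) ≤ SS j' i' := by
  unfold SS
  have hsg : sg (cc j i) + pp j ≤ sg (cc j' i') := by
    have hpt : ∀ l, (pp l * NN l (cc j i) + if l = j then pp j else 0)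
        ≤ pp l * NN l (cc j' i') := by
      intro l
      by_cases hl : l = j
      · subst hl
        rw [if_pos rfl]
        have h1 : NN l (cc l i) + 1 ≤ NN l (cc j' i') := NN_lt hi hlt
        have h2 : ((NN l (cc l i) : ℝ) + 1) ≤ NN l (cc j' i') := by exact_mod_cast h1
        have := pp_pos l
        nlinarith
      · simp only [if_neg hl, add_zero]
        have h1 : NN l (cc j i) ≤ NN l (cc j' i') := NN_mono l (le_of_lt hlt)
        have h2 : ((NN l (cc j i)):ℝ) ≤ NN l (cc j' i') := by exact_mod_cast h1
        have := pp_pos l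
        nlinarith
    have hs1 : Summable (fun l => pp l * NN l (cc j i) + if l = j then pp j else 0) := by
      apply Summable.add (summable_sg _)
      exact summable_of_ne_finset_zero (s := {j}) (by intro b hb; simp at hb; simp [hb])
    have := Summable.tsum_le_tsum hpt hs1 (summable_sg (cc j' i'))
    rw [Summable.tsum_add (summable_sg _) (by exact summable_of_ne_finset_zero (s := {j}) (by intro b hb; simp at hb; simp [hb]))] at this
    rw [tsum_ite_eq] at this
    exact this
  linarith

/-- plateaus are disjoint: if `cc j i < cc j' i'`, plateau (j,i) ends before (j',i') starts -/
lemma SS_disj {j i j' i' : ℕ} (hi : i < n j) (hi' : i' < n j')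
    (hlt : cc j i < cc j' i') : SS j i + pp j ≤ SS j' i' := by
  have := SS_gap hi hi' hlt
  linarith

end SO

namespace SO

/- ------------------ ramp and tent basics ------------------ -/

lemma ramp_nonneg (j i : ℕ) (x : ℝ) : 0 ≤ ramp j i x :=
  le_min (le_of_lt (pp_pos j)) (le_max_left _ _)

lemma ramp_le (j i : ℕ) (x : ℝ) : ramp j i x ≤ pp j := min_le_left _ _

lemma ramp_left {j i : ℕ} {x : ℝ} (h : x ≤ SS j i) : ramp j i x = 0 := by
  unfold ramp
  rw [max_eq_left (by linarith), min_eq_right (le_of_lt (pp_pos j))]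

lemma ramp_right {j i : ℕ} {x : ℝ} (h : SS j i + pp j ≤ x) : ramp j i x = pp j := by
  unfold ramp
  have hp := pp_pos j
  rw [max_eq_right (by linarith), min_eq_left (by linarith)]

lemma ramp_mid {j i : ℕ} {s : ℝ} (h0 : 0 ≤ s) (hp : s ≤ pp j) :
    ramp j i (SS j i + s) = s := by
  unfold ramp
  rw [show SS j i + s - SS j i = s by ring, max_eq_right h0, min_eq_right hp]

lemma ramp_lip (j i : ℕ) (x y : ℝ) : |ramp j i x - ramp j i y| ≤ |x - y| := by
  unfold ramp
  have h1 := abs_min_sub_min_le_max (pp j) (max 0 (x - SS j i)) (pp j) (max 0 (y - SS j i))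
  apply le_trans h1
  rw [sub_self, abs_zero, max_le_iff]
  constructor
  · exact abs_nonneg _
  · have h2 := abs_max_sub_max_le_abs (x - SS j i) (y - SS j i) 0
    rw [max_comm (x - SS j i), max_comm (y - SS j i)] at h2
    calc |max 0 (x - SS j i) - max 0 (y - SS j i)| ≤ |x - SS j i - (y - SS j i)| := h2
      _ = |x - y| := by ring_nf

lemma cont_ramp (j i : ℕ) : Continuous (ramp j i) := by
  unfold ramp
  fun_prop

lemma tent_nonneg (a b c x : ℝ) : 0 ≤ tent a b c x := le_max_left _ _

lemma tent_le_one {a b c x : ℝ} (hab : a < b) (hbc : b < c) : tent a b c x ≤ 1 := by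
  unfold tent
  rcases le_total x b with h | h
  · apply max_le (by norm_num)
    apply le_trans (min_le_left _ _)
    rw [div_le_one (by linarith)]
    linarith
  · apply max_le (by norm_num)
    apply le_trans (min_le_right _ _)
    rw [div_le_one (by linarith)]
    linarith

lemma tent_zero_left {a b c x : ℝ} (hab : a < b) (hx : x ≤ a) : tent a b c x = 0 := by
  unfold tent
  apply max_eq_left
  apply le_trans (min_le_left _ _)
  apply div_nonpos_of_nonpos_of_nonneg <;> linarith

lemma tent_zero_right {b c x : ℝ} (hbc : b < c) (hx : c ≤ x) : tent a b c x = 0 := by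
  unfold tent
  apply max_eq_left
  apply le_trans (min_le_right _ _)
  apply div_nonpos_of_nonpos_of_nonneg <;> linarith

lemma tent_peak {a b c : ℝ} (hab : a < b) (hbc : b < c) : tent a b c b = 1 := by
  unfold tent
  rw [div_self (by linarith), div_self (by linarith), min_self]
  exact max_eq_right (by norm_num)

lemma cont_tent (a b c : ℝ) : Continuous (tent a b c) := by
  unfold tent
  fun_prop

lemma cont_Wt (j i : ℕ) : Continuous (Wt j i) := by
  unfold Wt
  exact (continuous_const.mul (cont_tent _ _ _)).add (continuous_const.mul (cont_tent _ _ _))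

lemma D1_nonneg (j i : ℕ) : 0 ≤ D1 j i :=
  le_min (le_of_lt (dd_pos j)) (le_of_lt cc_pos)

lemma D1_le (j i : ℕ) : D1 j i ≤ dd j := min_le_left _ _
lemma D2_le (j i : ℕ) : D2 j i ≤ dd j := min_le_left _ _

lemma D2_nonneg {j i : ℕ} (hi : i < n j) : 0 ≤ D2 j i :=
  le_min (le_of_lt (dd_pos j)) (by linarith [cc_lt_one hi])

lemma Wt_zero_left {j i : ℕ} {x : ℝ} (h : x ≤ SS j i) : Wt j i x = 0 := by
  unfold Wt
  have hp := pp_pos j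
  rw [tent_zero_left (by linarith) h, tent_zero_left (by linarith) (by linarith)]
  ring

lemma Wt_zero_right {j i : ℕ} {x : ℝ} (h : SS j i + pp j ≤ x) : Wt j i x = 0 := by
  unfold Wt
  have hp := pp_pos j
  rw [tent_zero_right (by linarith) (by linarith), tent_zero_right (by linarith) (by linarith)]
  ring

lemma abs_Wt_le {j i : ℕ} (hi : i < n j) (x : ℝ) : |Wt j i x| ≤ dd j := by
  unfold Wt
  have hp := pp_pos j
  have hd1 := D1_nonneg j i
  have hd2 := D2_nonneg hi
  have hd1' := D1_le j i
  have hd2' := D2_le j i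
  rcases le_total x (SS j i + pp j / 2) with h | h
  · rw [tent_zero_left (by linarith) h]
    have ht0 := tent_nonneg (SS j i) (SS j i + pp j / 4) (SS j i + pp j / 2) x
    have ht1 := tent_le_one (a := SS j i) (b := SS j i + pp j / 4) (c := SS j i + pp j / 2)
      (x := x) (by linarith) (by linarith)
    rw [mul_zero, add_zero, abs_mul, abs_neg, abs_of_nonneg hd1,
      abs_of_nonneg ht0]
    nlinarith
  · rw [tent_zero_right (by linarith) h]
    have ht0 := tent_nonneg (SS j i + pp j / 2) (SS j i + 3 * pp j / 4) (SS j i + pp j) x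
    have ht1 := tent_le_one (a := SS j i + pp j / 2) (b := SS j i + 3 * pp j / 4)
      (c := SS j i + pp j) (x := x) (by linarith) (by linarith)
    rw [mul_zero, zero_add, abs_mul, abs_of_nonneg hd2, abs_of_nonneg ht0]
    nlinarith

lemma Wt_ne_zero {j i : ℕ} {x : ℝ} (h : Wt j i x ≠ 0) :
    SS j i < x ∧ x < SS j i + pp j := by
  constructor
  · by_contra hc
    exact h (Wt_zero_left (by linarith [not_lt.mp hc]))
  · by_contra hc
    exact h (Wt_zero_right (by linarith [not_lt.mp hc]))

end SO

namespace SO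

/- ------------------ continuity of AA, WW, FF ------------------ -/

lemma cont_Aj (j : ℕ) : Continuous (Aj j) :=
  continuous_finset_sum _ (fun i _ => cont_ramp j i)

lemma abs_Aj_le (j : ℕ) (x : ℝ) : |Aj j x| ≤ (n j : ℝ) * pp j := by
  unfold Aj
  apply le_trans (Finset.abs_sum_le_sum_abs _ _)
  have : ∀ i ∈ Finset.range (n j), |ramp j i x| ≤ pp j := by
    intro i _
    rw [abs_of_nonneg (ramp_nonneg j i x)]
    exact ramp_le j i x
  apply le_trans (Finset.sum_le_sum this)
  rw [Finset.sum_const, Finset.card_range, nsmul_eq_mul]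

lemma cont_AA : Continuous AA := by
  apply continuous_tsum cont_Aj summable_npp
  intro j x
  rw [Real.norm_eq_abs]
  exact abs_Aj_le j x

lemma cont_Wj (j : ℕ) : Continuous (Wj j) :=
  continuous_finset_sum _ (fun i _ => cont_Wt j i)

lemma dd_geom (j : ℕ) : dd j = (1/2) * (1/4)^j := by
  unfold dd q
  rw [pow_succ]
  have h4 : (4:ℝ)^j ≠ 0 := by positivity
  field_simp
  rw [mul_right_comm, ← mul_pow]; norm_num

lemma summable_dd : Summable dd := by
  rw [show dd = fun j => (1/2) * (1/4)^j from funext dd_geom]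
  exact (summable_geometric_of_lt_one (by norm_num) (by norm_num)).mul_left _

lemma abs_Wj_le (j : ℕ) (x : ℝ) : |Wj j x| ≤ dd j := by
  unfold Wj
  by_cases hex : ∃ i ∈ Finset.range (n j), Wt j i x ≠ 0
  · obtain ⟨i0, hi0, hne⟩ := hex
    rw [Finset.mem_range] at hi0
    have hx := Wt_ne_zero hne
    have hsum : ∑ i ∈ Finset.range (n j), Wt j i x = Wt j i0 x := by
      apply Finset.sum_eq_single
      · intro i' hi' hne'
        rw [Finset.mem_range] at hi'
        have hcc : cc j i' ≠ cc j i0 := cc_ne (by simp [hne'])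
        rcases lt_or_gt_of_ne hcc with h | h
        · exact Wt_zero_right (by linarith [SS_disj hi' hi0 h])
        · exact Wt_zero_left (by linarith [SS_disj hi0 hi' h])
      · intro hc
        exact absurd (Finset.mem_range.mpr hi0) hc
    rw [hsum]
    exact abs_Wt_le hi0 x
  · push_neg at hex
    rw [Finset.sum_eq_zero (fun i hi => hex i hi), abs_zero]
    exact le_of_lt (dd_pos j)

lemma cont_WW : Continuous WW := by
  apply continuous_tsum cont_Wj summable_dd
  intro j x
  rw [Real.norm_eq_abs]
  exact abs_Wj_le j x

lemma cont_FF : Continuous FF := by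
  unfold FF
  exact (continuous_id.sub cont_AA).add cont_WW

lemma cont_f1 : Continuous f1 := by
  unfold f1
  exact continuous_const.max (continuous_const.min (cont_FF.comp (continuous_const.mul continuous_id)))

lemma summable_Aj (x : ℝ) : Summable (fun j => Aj j x) := by
  apply Summable.of_norm
  apply Summable.of_nonneg_of_le (fun j => norm_nonneg _) _ summable_npp
  intro j
  rw [Real.norm_eq_abs]
  exact abs_Aj_le j x

lemma summable_Wj (x : ℝ) : Summable (fun j => Wj j x) := by
  apply Summable.of_norm
  apply Summable.of_nonneg_of_le (fun j => norm_nonneg _) _ summable_dd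
  intro j
  rw [Real.norm_eq_abs]
  exact abs_Wj_le j x

/- ------------------ plateau evaluation ------------------ -/

lemma Aj_plateau_other {j i l : ℕ} (hi : i < n j) (hl : l ≠ j) {s : ℝ}
    (hs0 : 0 ≤ s) (hsp : s ≤ pp j) :
    Aj l (SS j i + s) = pp l * NN l (cc j i) := by
  unfold Aj
  have hstep : ∀ i' ∈ Finset.range (n l),
      ramp l i' (SS j i + s) = if cc l i' < cc j i then pp l else 0 := by
    intro i' hi'
    rw [Finset.mem_range] at hi'
    have hcc : cc l i' ≠ cc j i := cc_ne (by simp [hl])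
    rcases lt_or_gt_of_ne hcc with h | h
    · rw [if_pos h]
      apply ramp_right
      have := SS_gap hi' hi h
      linarith
    · rw [if_neg (not_lt.mpr (le_of_lt h))]
      apply ramp_left
      have := SS_gap hi hi' h
      linarith
  rw [Finset.sum_congr rfl hstep, Finset.sum_ite, Finset.sum_const, Finset.sum_const]
  simp only [smul_zero, add_zero, nsmul_eq_mul]
  rw [mul_comm]
  congr 1

lemma Aj_plateau_self {j i : ℕ} (hi : i < n j) {s : ℝ}
    (hs0 : 0 ≤ s) (hsp : s ≤ pp j) :
    Aj j (SS j i + s) = pp j * NN j (cc j i) + s := by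
  unfold Aj
  have hstep : ∀ i' ∈ Finset.range (n j),
      ramp j i' (SS j i + s)
        = (if cc j i' < cc j i then pp j else 0) + (if i' = i then s else 0) := by
    intro i' hi'
    rw [Finset.mem_range] at hi'
    by_cases he : i' = i
    · subst he
      rw [if_neg (lt_irrefl _), if_pos rfl, zero_add]
      exact ramp_mid hs0 hsp
    · have hcc : cc j i' ≠ cc j i := cc_ne (by simp [he])
      rw [if_neg he, add_zero]
      rcases lt_or_gt_of_ne hcc with h | h
      · rw [if_pos h]
        apply ramp_right
        have := SS_gap hi' hi h
        linarith
      · rw [if_neg (not_lt.mpr (le_of_lt h))]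
        apply ramp_left
        have := SS_gap hi hi' h
        linarith
  rw [Finset.sum_congr rfl hstep, Finset.sum_add_distrib, Finset.sum_ite_eq'
    (Finset.range (n j)) i (fun _ => s), if_pos (Finset.mem_range.mpr hi)]
  congr 1
  rw [Finset.sum_ite, Finset.sum_const, Finset.sum_const]
  simp only [smul_zero, add_zero, nsmul_eq_mul]
  rw [mul_comm]
  congr 1

lemma AA_plateau {j i : ℕ} (hi : i < n j) {s : ℝ} (hs0 : 0 ≤ s) (hsp : s ≤ pp j) :
    AA (SS j i + s) = sg (cc j i) + s := by
  unfold AA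
  have hcong : ∀ l, Aj l (SS j i + s) = pp l * NN l (cc j i) + (if l = j then s else 0) := by
    intro l
    by_cases hl : l = j
    · subst hl
      rw [if_pos rfl, Aj_plateau_self hi hs0 hsp]
    · rw [if_neg hl, add_zero, Aj_plateau_other hi hl hs0 hsp]
  rw [tsum_congr hcong, Summable.tsum_add (summable_sg _)
    (summable_of_ne_finset_zero (s := {j}) (by intro b hb; simp at hb; simp [hb]))]
  rw [tsum_ite_eq]
  rfl

lemma WW_plateau {j i : ℕ} (hi : i < n j) {s : ℝ} (hs0 : 0 ≤ s) (hsp : s ≤ pp j) :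
    WW (SS j i + s) = Wt j i (SS j i + s) := by
  unfold WW
  have hW : ∀ l, l ≠ j → Wj l (SS j i + s) = 0 := by
    intro l hl
    unfold Wj
    apply Finset.sum_eq_zero
    intro i' hi'
    rw [Finset.mem_range] at hi'
    have hcc : cc l i' ≠ cc j i := cc_ne (by simp [hl])
    rcases lt_or_gt_of_ne hcc with h | h
    · exact Wt_zero_right (by linarith [SS_gap hi' hi h])
    · exact Wt_zero_left (by linarith [SS_gap hi hi' h])
  rw [tsum_eq_single j hW]
  unfold Wj
  apply Finset.sum_eq_single
  · intro i' hi' hne'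
    rw [Finset.mem_range] at hi'
    have hcc : cc j i' ≠ cc j i := cc_ne (by simp [hne'])
    rcases lt_or_gt_of_ne hcc with h | h
    · exact Wt_zero_right (by linarith [SS_gap hi' hi h])
    · exact Wt_zero_left (by linarith [SS_gap hi hi' h])
  · intro hc
    exact absurd (Finset.mem_range.mpr hi) hc

lemma FF_plateau {j i : ℕ} (hi : i < n j) {s : ℝ} (hs0 : 0 ≤ s) (hsp : s ≤ pp j) :
    FF (SS j i + s) = cc j i + Wt j i (SS j i + s) := by
  unfold FF
  rw [AA_plateau hi hs0 hsp, WW_plateau hi hs0 hsp]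
  unfold SS
  ring

lemma FF_low {j i : ℕ} (hi : i < n j) :
    FF (SS j i + pp j / 4) = cc j i - D1 j i := by
  have hp := pp_pos j
  rw [FF_plateau hi (by linarith) (by linarith)]
  unfold Wt
  rw [tent_peak (by linarith) (by linarith),
    tent_zero_left (by linarith) (by linarith)]
  ring

lemma FF_high {j i : ℕ} (hi : i < n j) :
    FF (SS j i + 3 * pp j / 4) = cc j i + D2 j i := by
  have hp := pp_pos j
  rw [FF_plateau hi (by linarith) (by linarith)]
  unfold Wt
  rw [tent_peak (by linarith) (by linarith),
    tent_zero_right (a := SS j i) (by linarith) (by linarith)]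
  ring

end SO

namespace SO

/- ------------------ fiber construction ------------------ -/

lemma pp_le_one (j : ℕ) : pp j ≤ 1 := by
  unfold pp
  rw [inv_le_one_iff₀]
  right
  exact one_le_pow₀ (by norm_num)

lemma pp_le64 (j : ℕ) : pp j ≤ 1/64 := by
  unfold pp
  rw [show (1:ℝ)/64 = ((64:ℝ)^1)⁻¹ by norm_num]
  apply inv_anti₀ (by norm_num)
  exact pow_le_pow_right₀ (by norm_num) (by omega)

lemma q_eq (j : ℕ) : q j = 2 * n j := by
  unfold q n
  push_cast
  ring

lemma grid_near {y : ℝ} (hy : y ∈ Icc (0:ℝ) 1) (j : ℕ) :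
    ∃ i < n j, |y - cc j i| ≤ 1 / q j := by
  obtain ⟨hy0, hy1⟩ := hy
  have hN : 0 < n j := by unfold n; positivity
  have hNR : (0:ℝ) < n j := by exact_mod_cast hN
  have habs : ∀ i : ℕ, |y * (2 * (n j : ℝ)) - (2 * i + 1)| ≤ 1 → |y - cc j i| ≤ 1 / q j := by
    intro i hkey
    have hrw : y - cc j i = (y * (2 * (n j : ℝ)) - (2 * i + 1)) / (2 * (n j : ℝ)) := by
      unfold cc
      rw [q_eq]
      field_simp
    rw [hrw, abs_div, abs_of_pos (show (0:ℝ) < 2 * (n j : ℝ) from by positivity), q_eq]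
    gcongr
  set t := y * n j with ht
  have ht0 : 0 ≤ t := by positivity
  by_cases hcase : Nat.floor t < n j
  · refine ⟨Nat.floor t, hcase, habs _ ?_⟩
    have hfl : (Nat.floor t : ℝ) ≤ t := Nat.floor_le ht0
    have hlt : t < Nat.floor t + 1 := Nat.lt_floor_add_one t
    rw [abs_le]
    constructor <;> nlinarith
  · push_neg at hcase
    have h1 : (n j : ℝ) ≤ t := by
      calc (n j : ℝ) ≤ Nat.floor t := by exact_mod_cast hcase
        _ ≤ t := Nat.floor_le ht0
    have hy1' : 1 ≤ y := by nlinarith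
    have hyeq : y = 1 := le_antisymm hy1 hy1'
    refine ⟨n j - 1, by omega, habs _ ?_⟩
    subst hyeq
    have hcast : ((n j - 1 : ℕ) : ℝ) = (n j : ℝ) - 1 := by
      rw [Nat.cast_sub (by omega)]
      norm_num
    rw [hcast, abs_le]
    constructor <;> nlinarith

lemma coverage {y : ℝ} (hy : y ∈ Icc (0:ℝ) 1) {j i : ℕ}
    (hnear : |y - cc j i| ≤ 1 / q j) :
    cc j i - D1 j i ≤ y ∧ y ≤ cc j i + D2 j i := by
  obtain ⟨hy0, hy1⟩ := hy
  rw [abs_le] at hnear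
  have hdd : dd j = 2 / q j := rfl
  have hq := q_pos j
  constructor
  · unfold D1
    rcases min_cases (dd j) (cc j i) with ⟨h, _⟩ | ⟨h, _⟩
    · rw [h, hdd]
      have : 1 / q j ≤ 2 / q j := by
        rw [div_le_div_iff_of_pos_right hq]; norm_num
      linarith [hnear.2]
    · rw [h]; linarith
  · unfold D2
    rcases min_cases (dd j) (1 - cc j i) with ⟨h, _⟩ | ⟨h, _⟩
    · rw [h, hdd]
      have : 1 / q j ≤ 2 / q j := by
        rw [div_le_div_iff_of_pos_right hq]; norm_num
      linarith [hnear.1]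
    · rw [h]; linarith

lemma sg_lt (x : ℝ) : sg x ≤ 1/30 := sg_le x

lemma SS_nonneg (j i : ℕ) : 0 ≤ SS j i := by
  unfold SS
  have := sg_nonneg (cc j i)
  have : (0:ℝ) < cc j i := cc_pos
  linarith [sg_nonneg (cc j i)]

lemma SS_le {j i : ℕ} (hi : i < n j) : SS j i + pp j ≤ 2 := by
  unfold SS
  have h1 := cc_lt_one hi
  have h2 := sg_le (cc j i)
  have h3 := pp_le64 j
  linarith

lemma fiber_witness {y : ℝ} (hy : y ∈ Icc (0:ℝ) 1) (j : ℕ) :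
    ∃ i < n j, ∃ x ∈ Icc (SS j i + pp j / 4) (SS j i + 3 * pp j / 4), FF x = y := by
  obtain ⟨i, hi, hnear⟩ := grid_near hy j
  obtain ⟨hcov1, hcov2⟩ := coverage hy hnear
  have hp := pp_pos j
  have hsub : y ∈ Icc (FF (SS j i + pp j / 4)) (FF (SS j i + 3 * pp j / 4)) := by
    rw [FF_low hi, FF_high hi]
    exact ⟨hcov1, hcov2⟩
  have := intermediate_value_Icc (by linarith : SS j i + pp j / 4 ≤ SS j i + 3 * pp j / 4)
    (cont_FF.continuousOn)
  obtain ⟨x, hx, hfx⟩ := this hsub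
  exact ⟨i, hi, x, hx, hfx⟩

/-- fibers of f1 inside [0,1] are infinite -/
lemma f1_fiber_infinite {y : ℝ} (hy : y ∈ Icc (0:ℝ) 1) :
    {u : ℝ | u ∈ Icc (0:ℝ) 1 ∧ f1 u = y}.Infinite := by
  have hch : ∀ j : ℕ, ∃ p : ℕ × ℝ, p.1 < n j ∧
      p.2 ∈ Icc (SS j p.1 + pp j / 4) (SS j p.1 + 3 * pp j / 4) ∧ FF p.2 = y := by
    intro j
    obtain ⟨i, hi, x, hx, hfx⟩ := fiber_witness hy j
    exact ⟨(i, x), hi, hx, hfx⟩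
  choose P hP1 hP2 hP3 using hch
  apply Set.infinite_of_injective_forall_mem (f := fun j => (P j).2 / 2)
  · -- injectivity
    intro j j' hjj
    simp only at hjj
    have hxe : (P j).2 = (P j').2 := by linarith
    by_contra hne
    have hcc : cc j (P j).1 ≠ cc j' (P j').1 := cc_ne (by simp [hne])
    have h2j := hP2 j
    have h2j' := hP2 j'
    have hpj := pp_pos j
    have hpj' := pp_pos j'
    rcases lt_or_gt_of_ne hcc with h | h
    · have := SS_disj (hP1 j) (hP1 j') h
      have e1 := h2j.2
      have e2 := h2j'.1
      rw [hxe] at e1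
      linarith
    · have := SS_disj (hP1 j') (hP1 j) h
      have e1 := h2j'.2
      have e2 := h2j.1
      rw [hxe] at e2
      linarith
  · intro j
    have hp := pp_pos j
    have h1 := (hP2 j).1
    have h2 := (hP2 j).2
    have hS0 := SS_nonneg j (P j).1
    have hS2 := SS_le (hP1 j)
    constructor
    · constructor
      · linarith
      · linarith
    · -- f1 ((P j).2 / 2) = y
      unfold f1
      rw [show 2 * ((P j).2 / 2) = (P j).2 by ring, hP3 j]
      obtain ⟨hy0, hy1⟩ := hy
      rw [min_eq_right hy1, max_eq_right hy0]

end SO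

namespace SO

/- ------------------ good radius machinery ------------------ -/

/-- X lies in the closed plateau of (j,i) -/
def own (X : ℝ) (j i : ℕ) : Prop := SS j i ≤ X ∧ X ≤ SS j i + pp j

/-- the plateau of (j,i) meets [X-r, X+r] -/
def hit (X r : ℝ) (j i : ℕ) : Prop := SS j i ≤ X + r ∧ X - r ≤ SS j i + pp j

noncomputable def distX (X : ℝ) (j i : ℕ) : ℝ :=
  max 0 (max (SS j i - X) (X - (SS j i + pp j)))

lemma distX_nonneg (X : ℝ) (j i : ℕ) : 0 ≤ distX X j i := le_max_left _ _

lemma distX_pos {X : ℝ} {j i : ℕ} (h : ¬ own X j i) : 0 < distX X j i := by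
  unfold own at h
  push_neg at h
  unfold distX
  rcases le_or_gt (SS j i) X with h1 | h1
  · have := h h1
    apply lt_max_of_lt_right
    apply lt_max_of_lt_right
    linarith
  · apply lt_max_of_lt_right
    apply lt_max_of_lt_left
    linarith

lemma hit_of_distX {X r : ℝ} {j i : ℕ} (hr : 0 ≤ r) (h : distX X j i ≤ r) :
    hit X r j i := by
  unfold distX at h
  rw [max_le_iff, max_le_iff] at h
  exact ⟨by linarith [h.2.1], by linarith [h.2.2]⟩

lemma distX_le_of_hit {X r : ℝ} {j i : ℕ} (hr : 0 ≤ r) (h : hit X r j i) :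
    distX X j i ≤ r := by
  obtain ⟨h1, h2⟩ := h
  unfold distX
  rw [max_le_iff, max_le_iff]
  exact ⟨hr, by linarith, by linarith⟩

/-- the key pairing estimate between two distinct plateaus -/
lemma distX_pair {X : ℝ} {j i j' i' : ℕ} (hi : i < n j) (hi' : i' < n j')
    (hlt : cc j i < cc j' i') :
    cc j' i' - cc j i ≤ distX X j i + distX X j' i' := by
  have h1 : X - (SS j i + pp j) ≤ distX X j i :=
    le_trans (le_max_right _ _) (le_max_right _ _)
  have h2 : SS j' i' - X ≤ distX X j' i' :=
    le_trans (le_max_left _ _) (le_max_right _ _)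
  have := SS_gap hi hi' hlt
  linarith

lemma dd_anti {j j' : ℕ} (h : j ≤ j') : dd j' ≤ dd j := by
  rw [dd_geom, dd_geom]
  have : ((1:ℝ))/4 ≤ 1 := by norm_num
  have h2 : ((1:ℝ)/4)^j' ≤ (1/4)^j := pow_le_pow_of_le_one (by norm_num) (by norm_num) h
  linarith

lemma n_mono {j j' : ℕ} (h : j ≤ j') : n j ≤ n j' := by
  unfold n
  have : (4:ℕ)^j ≤ 4^j' := Nat.pow_le_pow_right (by norm_num) h
  omega

lemma tsum_dd_le : (∑' j, dd j) ≤ 1 := by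
  rw [show dd = fun j => (1/2) * (1/4)^j from funext dd_geom]
  rw [tsum_mul_left, tsum_geometric_of_lt_one (by norm_num) (by norm_num)]
  norm_num

lemma exists_dd_lt {δ : ℝ} (hδ : 0 < δ) : ∃ J, dd J < δ := by
  obtain ⟨J, hJ⟩ := exists_pow_lt_of_lt_one (show (0:ℝ) < 2*δ by linarith) (show (1:ℝ)/4 < 1 by norm_num)
  refine ⟨J, ?_⟩
  rw [dd_geom]
  linarith

/-- THE GOOD RADIUS LEMMA -/
lemma good_radius (X : ℝ) {ε : ℝ} (hε : 0 < ε) :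
    ∃ r, 0 < r ∧ r < ε ∧ ∀ j i, i < n j → ¬ own X j i → hit X r j i → dd j ≤ 64 * r := by
  classical
  by_cases hQ : ∃ j i, i < n j ∧ ¬ own X j i ∧ distX X j i < dd j / 64 ∧ dd j < 8 * ε
  · -- case 1 : there is a relatively-close plateau of small scale
    obtain ⟨j', i', hi', hno', hcl', hsm'⟩ := hQ
    have hdd' := dd_pos j'
    refine ⟨dd j' / 8, by linarith, by linarith, ?_⟩
    intro j i hi hno hhit
    by_cases heq : (j, i) = (j', i')
    · rw [Prod.mk.injEq] at heq
      rw [heq.1]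
      linarith
    · by_contra hbig
      push_neg at hbig
      -- dd j > 8 * dd j', so j < j'
      have hjj : j < j' := by
        by_contra hle
        push_neg at hle
        have := dd_anti hle
        linarith
      have hccne : cc j i ≠ cc j' i' := cc_ne heq
      have hd : distX X j i ≤ dd j' / 8 := distX_le_of_hit (by linarith) hhit
      -- pairing
      have hsep : 1 / q j' ≤ |cc j i - cc j' i'| := by
        have := cc_sep heq
        rwa [max_eq_right (le_of_lt hjj)] at this
      have hq' : 1 / q j' = dd j' / 2 := by
        unfold dd; ring
      rcases lt_or_gt_of_ne hccne with h | h
      · have hpair := distX_pair (X := X) hi hi' h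
        rw [abs_of_neg (by linarith)] at hsep
        rw [hq'] at hsep
        linarith
      · have hpair := distX_pair (X := X) hi' hi h
        rw [abs_of_pos (by linarith)] at hsep
        rw [hq'] at hsep
        linarith
  · -- case 2 : all relatively-close plateaus are big scale; they form a finite set
    push_neg at hQ
    obtain ⟨J, hJ⟩ := exists_dd_lt (show (0:ℝ) < 8 * ε by linarith)
    -- minimum over the finite set of candidate plateaus
    set F : Finset (ℕ × ℕ) := Finset.range J ×ˢ Finset.range (n J) with hF
    set g : ℕ × ℕ → ℝ := fun t =>
      if t.2 < n t.1 ∧ ¬ own X t.1 t.2 then distX X t.1 t.2 else ε with hg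
    have hgpos : ∀ t, 0 < g t := by
      intro t
      by_cases h : t.2 < n t.1 ∧ ¬ own X t.1 t.2
      · rw [show g t = distX X t.1 t.2 from if_pos h]; exact distX_pos h.2
      · rw [show g t = ε from if_neg h]; exact hε
    set vals : Finset ℝ := F.image g with hv
    by_cases hne : vals.Nonempty
    · set M := min ε (vals.min' hne) with hM
      have hMpos : 0 < M := by
        apply lt_min hε
        have hmem := Finset.min'_mem vals hne
        obtain ⟨t, _, ht⟩ := Finset.mem_image.mp hmem
        rw [← ht]
        exact hgpos t
      refine ⟨M / 2, by linarith, ?_, ?_⟩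
      · have : M ≤ ε := min_le_left _ _
        linarith
      · intro j i hi hno hhit
        by_contra hbig
        push_neg at hbig
        have hMr : M / 2 ≥ 0 := by linarith
        have hdx : distX X j i ≤ M / 2 := distX_le_of_hit hMr hhit
        have hbad : distX X j i < dd j / 64 := by linarith
        have hsmall := hQ j i hi hno hbad
        -- dd j ≥ 8 ε, so j < J
        have hjJ : j < J := by
          by_contra hle
          push_neg at hle
          have := dd_anti hle
          linarith
        have htF : (j, i) ∈ F := by
          rw [hF, Finset.mem_product]
          exact ⟨Finset.mem_range.mpr hjJ, Finset.mem_range.mpr (lt_of_lt_of_le hi (n_mono (le_of_lt hjJ)))⟩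
        have hgt : g (j, i) ∈ vals := Finset.mem_image_of_mem g htF
        have : vals.min' hne ≤ g (j, i) := Finset.min'_le _ _ hgt
        have hgval : g (j, i) = distX X j i := if_pos ⟨hi, hno⟩
        rw [hgval] at this
        have : M ≤ distX X j i := le_trans (min_le_right _ _) this
        have := distX_pos hno
        linarith
    · -- vals empty: J = 0 or n J = 0 impossible unless J = 0; then no bad plateaus at all
      refine ⟨ε / 2, by linarith, by linarith, ?_⟩
      intro j i hi hno hhit
      by_contra hbig
      push_neg at hbig
      have hdx : distX X j i ≤ ε / 2 := distX_le_of_hit (by linarith) hhit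
      have hbad : distX X j i < dd j / 64 := by linarith
      have hsmall := hQ j i hi hno hbad
      have hjJ : j < J := by
        by_contra hle
        push_neg at hle
        have := dd_anti hle
        linarith
      have htF : (j, i) ∈ F := by
        rw [hF, Finset.mem_product]
        exact ⟨Finset.mem_range.mpr hjJ, Finset.mem_range.mpr (lt_of_lt_of_le hi (n_mono (le_of_lt hjJ)))⟩
      exact hne ⟨g (j, i), Finset.mem_image_of_mem g htF⟩

end SO

namespace SO

/- ------------------ increment estimates ------------------ -/

lemma npp_eq_dd2 (j : ℕ) : (n j : ℝ) * pp j = (1/8) * dd j ^ 2 := by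
  rw [npp_eq, dd_geom, mul_pow, pow_right_comm]
  norm_num
  ring

lemma own_unique {X : ℝ} {j i j' i' : ℕ} (hi : i < n j) (hi' : i' < n j')
    (h1 : own X j i) (h2 : own X j' i') : (j, i) = (j', i') := by
  by_contra hne
  have hcc : cc j i ≠ cc j' i' := cc_ne hne
  rcases lt_or_gt_of_ne hcc with h | h
  · have := SS_gap hi hi' h
    have e1 := h1.2
    have e2 := h2.1
    have : cc j' i' - cc j i ≤ 0 := by linarith
    linarith
  · have := SS_gap hi' hi h
    have e1 := h2.2
    have e2 := h1.1
    have : cc j i - cc j' i' ≤ 0 := by linarith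
    linarith

lemma ramp_const {X r : ℝ} (hr : 0 ≤ r) {j i : ℕ} (hnh : ¬ hit X r j i)
    {Y : ℝ} (hY : |Y - X| ≤ r) : ramp j i Y = ramp j i X := by
  unfold hit at hnh
  rw [abs_le] at hY
  push_neg at hnh
  by_cases hA : SS j i ≤ X + r
  · have hB := hnh hA
    rw [ramp_right (by linarith), ramp_right (by linarith)]
  · push_neg at hA
    rw [ramp_left (by linarith), ramp_left (by linarith)]

lemma Wt_const_zero {X r : ℝ} (hr : 0 ≤ r) {j i : ℕ} (hnh : ¬ hit X r j i)
    {Y : ℝ} (hY : |Y - X| ≤ r) : Wt j i Y = 0 := by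
  unfold hit at hnh
  rw [abs_le] at hY
  push_neg at hnh
  by_cases hA : SS j i ≤ X + r
  · have hB := hnh hA
    exact Wt_zero_right (by linarith)
  · push_neg at hA
    exact Wt_zero_left (by linarith)

/-- the A-increment bound at a good radius -/
lemma AA_inc {X r : ℝ} (hr0 : 0 < r)
    (hgood : ∀ j i, i < n j → ¬ own X j i → hit X r j i → dd j ≤ 64 * r)
    {P Q : ℝ} (hP : |P - X| ≤ r) (hQ : |Q - X| ≤ r) :
    |AA Q - AA P| ≤ 18 * r := by
  classical
  have hPQ : |Q - P| ≤ 2 * r := by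
    rw [abs_le] at *
    constructor <;> [linarith [hP.1, hQ.2]; linarith [hP.2, hQ.1]]
  have hfine_bound : ∀ j, dd j ≤ 64 * r → |Aj j Q - Aj j P| ≤ 16 * r * dd j := by
    intro j hfine
    have h1 := abs_Aj_le j Q
    have h2 := abs_Aj_le j P
    have h3 : (n j : ℝ) * pp j ≤ 8 * r * dd j := by
      rw [npp_eq_dd2]
      have := dd_pos j
      nlinarith
    calc |Aj j Q - Aj j P| ≤ |Aj j Q| + |Aj j P| := abs_sub _ _
      _ ≤ 16 * r * dd j := by linarith
  have hconst : ∀ j, 64 * r < dd j → ∀ i, i < n j → ¬ own X j i →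
      ramp j i Q - ramp j i P = 0 := by
    intro j hcoarse i hi hno
    have hnh : ¬ hit X r j i := by
      intro hh
      exact absurd (hgood j i hi hno hh) (by linarith)
    rw [ramp_const (le_of_lt hr0) hnh hQ, ramp_const (le_of_lt hr0) hnh hP, sub_self]
  have hAd : ∀ j, Aj j Q - Aj j P
      = ∑ i ∈ Finset.range (n j), (ramp j i Q - ramp j i P) := by
    intro j
    unfold Aj
    rw [Finset.sum_sub_distrib]
  have hmain : ∃ j0 : ℕ, ∀ j, |Aj j Q - Aj j P| ≤ 16 * r * dd j + (if j = j0 then 2 * r else 0) := by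
    rcases Classical.em (∃ t : ℕ × ℕ, t.2 < n t.1 ∧ own X t.1 t.2) with hex | hex
    · obtain ⟨⟨j0, i0⟩, hi0, hown0⟩ := hex
      refine ⟨j0, fun j => ?_⟩
      have hind : (0:ℝ) ≤ if j = j0 then 2 * r else 0 := by
        by_cases h : j = j0
        · rw [if_pos h]; linarith
        · rw [if_neg h]
      by_cases hfine : dd j ≤ 64 * r
      · have := hfine_bound j hfine
        linarith
      · push_neg at hfine
        by_cases hjj : j = j0
        · subst hjj
          have hstep : Aj j Q - Aj j P = ramp j i0 Q - ramp j i0 P := by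
            rw [hAd]
            apply Finset.sum_eq_single
            · intro i' hi' hne'
              apply hconst j hfine i' (Finset.mem_range.mp hi')
              intro howni'
              have := own_unique (Finset.mem_range.mp hi') hi0 howni' hown0
              rw [Prod.mk.injEq] at this
              exact hne' this.2
            · intro hc
              exact absurd (Finset.mem_range.mpr hi0) hc
          rw [hstep, if_pos rfl]
          have h5 : 0 ≤ 16 * r * dd j := by
            have := dd_pos j
            positivity
          calc |ramp j i0 Q - ramp j i0 P| ≤ |Q - P| := ramp_lip j i0 Q P
            _ ≤ 2 * r := hPQ
            _ ≤ 16 * r * dd j + 2 * r := by linarith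
        · have hstep : Aj j Q - Aj j P = 0 := by
            rw [hAd]
            apply Finset.sum_eq_zero
            intro i hi
            apply hconst j hfine i (Finset.mem_range.mp hi)
            intro howni
            have := own_unique (Finset.mem_range.mp hi) hi0 howni hown0
            rw [Prod.mk.injEq] at this
            exact hjj this.1
          rw [hstep, abs_zero]
          have : 0 ≤ 16 * r * dd j := by
            have := dd_pos j
            positivity
          linarith
    · push_neg at hex
      refine ⟨0, fun j => ?_⟩
      have hind : (0:ℝ) ≤ if j = 0 then 2 * r else 0 := by
        by_cases h : j = 0
        · rw [if_pos h]; linarith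
        · rw [if_neg h]
      by_cases hfine : dd j ≤ 64 * r
      · have := hfine_bound j hfine
        linarith
      · push_neg at hfine
        have hstep : Aj j Q - Aj j P = 0 := by
          rw [hAd]
          apply Finset.sum_eq_zero
          intro i hi
          exact hconst j hfine i (Finset.mem_range.mp hi) (hex (j, i) (Finset.mem_range.mp hi))
        rw [hstep, abs_zero]
        have : 0 ≤ 16 * r * dd j := by
          have := dd_pos j
          positivity
        linarith
  obtain ⟨j0, hkey⟩ := hmain
  have hbsum : Summable (fun j => 16 * r * dd j + (if j = j0 then 2 * r else 0)) := by
    apply Summable.add (summable_dd.mul_left (16 * r))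
    exact summable_of_ne_finset_zero (s := {j0}) (by intro c hc; simp at hc; simp [hc])
  have habs : Summable (fun j => |Aj j Q - Aj j P|) :=
    Summable.of_nonneg_of_le (fun j => abs_nonneg _) hkey hbsum
  have hnorm : Summable (fun j => ‖Aj j Q - Aj j P‖) := by
    simpa [Real.norm_eq_abs] using habs
  have h1' := norm_tsum_le_tsum_norm hnorm
  simp only [Real.norm_eq_abs] at h1'
  have h1 : |AA Q - AA P| ≤ ∑' j, |Aj j Q - Aj j P| := by
    unfold AA
    rw [← Summable.tsum_sub (summable_Aj Q) (summable_Aj P)]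
    exact h1'
  have h2 : (∑' j, |Aj j Q - Aj j P|)
      ≤ ∑' j, (16 * r * dd j + (if j = j0 then 2 * r else 0)) :=
    Summable.tsum_le_tsum hkey habs hbsum
  have h3 : (∑' j, (16 * r * dd j + (if j = j0 then 2 * r else 0)))
      = 16 * r * (∑' j, dd j) + 2 * r := by
    rw [Summable.tsum_add (summable_dd.mul_left (16 * r))
      (summable_of_ne_finset_zero (s := {j0}) (by intro c hc; simp at hc; simp [hc]))]
    rw [tsum_mul_left, tsum_ite_eq]
  have h4 : 16 * r * (∑' j, dd j) ≤ 16 * r := by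
    have hd0 : 0 ≤ ∑' j, dd j := tsum_nonneg (fun j => le_of_lt (dd_pos j))
    nlinarith [tsum_dd_le]
  linarith

end SO

namespace SO

/- ------------------ W-part estimates and plateau Lipschitz ------------------ -/

lemma WW_zero_of_no_open {P : ℝ}
    (h : ∀ j i, i < n j → ¬(SS j i < P ∧ P < SS j i + pp j)) : WW P = 0 := by
  unfold WW
  have : ∀ j, Wj j P = 0 := by
    intro j
    unfold Wj
    apply Finset.sum_eq_zero
    intro i hi
    have hni := Finset.mem_range.mp hi
    have := h j i hni
    rcases le_or_gt P (SS j i) with h1 | h1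
    · exact Wt_zero_left h1
    · have h2 : SS j i + pp j ≤ P := by
        by_contra hc
        push_neg at hc
        exact this ⟨h1, hc⟩
      exact Wt_zero_right h2
  simp only [this]
  exact tsum_zero

lemma WW_plateau' {j i : ℕ} (hi : i < n j) {z : ℝ}
    (h1 : SS j i ≤ z) (h2 : z ≤ SS j i + pp j) : WW z = Wt j i z := by
  have := WW_plateau hi (s := z - SS j i) (by linarith) (by linarith)
  rwa [show SS j i + (z - SS j i) = z by ring] at this

lemma FF_plateau' {j i : ℕ} (hi : i < n j) {z : ℝ}
    (h1 : SS j i ≤ z) (h2 : z ≤ SS j i + pp j) : FF z = cc j i + Wt j i z := by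
  have := FF_plateau hi (s := z - SS j i) (by linarith) (by linarith)
  rwa [show SS j i + (z - SS j i) = z by ring] at this

lemma tent_lip {a s : ℝ} (hs : 0 < s) (x y : ℝ) :
    |tent a (a + s) (a + 2*s) x - tent a (a + s) (a + 2*s) y| ≤ (1/s) * |x - y| := by
  unfold tent
  have hba : (a + s) - a = s := by ring
  have hcb : (a + 2*s) - (a + s) = s := by ring
  rw [hba, hcb]
  have h1 := abs_max_sub_max_le_abs (min ((x - a)/s) ((a + 2*s - x)/s))
    (min ((y - a)/s) ((a + 2*s - y)/s)) 0
  rw [max_comm (min ((x - a)/s) ((a + 2*s - x)/s)), max_comm (min ((y - a)/s) ((a + 2*s - y)/s))] at h1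
  apply le_trans h1
  have h2 := abs_min_sub_min_le_max ((x - a)/s) ((a + 2*s - x)/s) ((y - a)/s) ((a + 2*s - y)/s)
  apply le_trans h2
  have e1 : (x - a)/s - (y - a)/s = (x - y)/s := by ring
  have e2 : (a + 2*s - x)/s - (a + 2*s - y)/s = (y - x)/s := by ring
  rw [e1, e2]
  rw [abs_div, abs_div, abs_of_pos hs]
  rw [abs_sub_comm y x]
  rw [max_self]
  rw [div_eq_inv_mul, one_div]

lemma Wt_lip {j i : ℕ} (hi : i < n j) (x y : ℝ) :
    |Wt j i x - Wt j i y| ≤ (8 * dd j / pp j) * |x - y| := by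
  have hp := pp_pos j
  have hd := dd_pos j
  have hs : (0:ℝ) < pp j / 4 := by linarith
  have ht1 := tent_lip (a := SS j i) hs x y
  have ht2 := tent_lip (a := SS j i + pp j / 2) hs x y
  rw [show SS j i + 2 * (pp j / 4) = SS j i + pp j / 2 by ring] at ht1
  rw [show SS j i + pp j / 2 + (pp j / 4) = SS j i + 3 * pp j / 4 by ring,
    show SS j i + pp j / 2 + 2 * (pp j / 4) = SS j i + pp j by ring] at ht2
  rw [show SS j i + (pp j / 4) = SS j i + pp j / 4 by ring] at ht1
  unfold Wt
  have hD1 := D1_nonneg j i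
  have hD2 := D2_nonneg hi
  have hD1' := D1_le j i
  have hD2' := D2_le j i
  have key : -(D1 j i) * tent (SS j i) (SS j i + pp j / 4) (SS j i + pp j / 2) x
      + (D2 j i) * tent (SS j i + pp j / 2) (SS j i + 3 * pp j / 4) (SS j i + pp j) x
      - (-(D1 j i) * tent (SS j i) (SS j i + pp j / 4) (SS j i + pp j / 2) y
      + (D2 j i) * tent (SS j i + pp j / 2) (SS j i + 3 * pp j / 4) (SS j i + pp j) y)
      = -(D1 j i) * (tent (SS j i) (SS j i + pp j / 4) (SS j i + pp j / 2) x
          - tent (SS j i) (SS j i + pp j / 4) (SS j i + pp j / 2) y)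
        + (D2 j i) * (tent (SS j i + pp j / 2) (SS j i + 3 * pp j / 4) (SS j i + pp j) x
          - tent (SS j i + pp j / 2) (SS j i + 3 * pp j / 4) (SS j i + pp j) y) := by
    ring
  rw [key]
  apply le_trans (abs_add_le _ _)
  rw [abs_mul, abs_mul, abs_neg, abs_of_nonneg hD1, abs_of_nonneg hD2]
  have b1 : D1 j i * |tent (SS j i) (SS j i + pp j / 4) (SS j i + pp j / 2) x
      - tent (SS j i) (SS j i + pp j / 4) (SS j i + pp j / 2) y|
      ≤ dd j * ((1 / (pp j / 4)) * |x - y|) := by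
    apply mul_le_mul hD1' ht1 (abs_nonneg _) (le_of_lt hd)
  have b2 : D2 j i * |tent (SS j i + pp j / 2) (SS j i + 3 * pp j / 4) (SS j i + pp j) x
      - tent (SS j i + pp j / 2) (SS j i + 3 * pp j / 4) (SS j i + pp j) y|
      ≤ dd j * ((1 / (pp j / 4)) * |x - y|) := by
    apply mul_le_mul hD2' ht2 (abs_nonneg _) (le_of_lt hd)
  have e : dd j * ((1 / (pp j / 4)) * |x - y|) = (4 * dd j / pp j) * |x - y| := by
    field_simp
  rw [e] at b1 b2
  have : (8 * dd j / pp j) * |x - y| = (4 * dd j / pp j) * |x - y| + (4 * dd j / pp j) * |x - y| := by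
    ring
  rw [this]
  linarith

lemma open_disjoint {j i j' i' : ℕ} (hi : i < n j) (hi' : i' < n j') (hne : (j,i) ≠ (j',i'))
    {z : ℝ} (hz1 : SS j i ≤ z) (hz2 : z ≤ SS j i + pp j) :
    ¬(SS j' i' < z ∧ z < SS j' i' + pp j') := by
  rcases lt_or_gt_of_ne (cc_ne hne) with h | h
  · have := SS_gap hi hi' h
    intro hc
    linarith [hc.1]
  · have := SS_gap hi' hi h
    intro hc
    linarith [hc.2]

/-- the core oscillation estimate away from the own plateau -/
lemma FF_osc_core {X r : ℝ} (hr0 : 0 < r)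
    (hgood : ∀ j i, i < n j → ¬ own X j i → hit X r j i → dd j ≤ 64 * r)
    {P Q : ℝ} (hP : |P - X| ≤ r) (hQ : |Q - X| ≤ r)
    (hPno : ∀ j i, i < n j → ¬(SS j i < P ∧ P < SS j i + pp j))
    (hQX : ∀ j i, i < n j → (SS j i < Q ∧ Q < SS j i + pp j) → ¬ own X j i) :
    |FF Q - FF P| ≤ 84 * r := by
  classical
  have hWP : WW P = 0 := WW_zero_of_no_open hPno
  have hWQ : |WW Q| ≤ 64 * r := by
    by_cases hq : ∃ j, ∃ i, i < n j ∧ SS j i < Q ∧ Q < SS j i + pp j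
    · obtain ⟨j1, i1, hi1, ho1, ho2⟩ := hq
      rw [WW_plateau' hi1 (le_of_lt ho1) (le_of_lt ho2)]
      have h1 : |Wt j1 i1 Q| ≤ dd j1 := abs_Wt_le hi1 Q
      have hQ' := abs_le.mp hQ
      have hhit : hit X r j1 i1 := by
        constructor
        · linarith [hQ'.2]
        · linarith [hQ'.1]
      have := hgood j1 i1 hi1 (hQX j1 i1 hi1 ⟨ho1, ho2⟩) hhit
      linarith
    · push_neg at hq
      rw [WW_zero_of_no_open (by
        intro j i hni
        intro hc
        exact absurd hc.2 (not_lt.mpr (hq j i hni hc.1)))]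
      rw [abs_zero]
      linarith
  have hAA := AA_inc hr0 hgood hP hQ
  have hPQ : |Q - P| ≤ 2 * r := by
    have h1 := abs_le.mp hP
    have h2 := abs_le.mp hQ
    rw [abs_le]
    constructor <;> linarith [h1.1, h1.2, h2.1, h2.2]
  have hdecomp : FF Q - FF P = (Q - P) - (AA Q - AA P) + WW Q := by
    unfold FF
    rw [hWP]
    ring
  rw [hdecomp]
  calc |(Q - P) - (AA Q - AA P) + WW Q|
      ≤ |(Q - P) - (AA Q - AA P)| + |WW Q| := abs_add_le _ _
    _ ≤ |Q - P| + |AA Q - AA P| + |WW Q| := by linarith [abs_sub (Q - P) (AA Q - AA P)]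
    _ ≤ 84 * r := by linarith

end SO

namespace SO

/- ------------------ the per-point oscillation lemma ------------------ -/

lemma FF_osc (X : ℝ) :
    ∃ K, 0 < K ∧ ∀ ε : ℝ, 0 < ε → ∃ r, 0 < r ∧ r < ε ∧
      ∀ Y, |Y - X| ≤ r → |FF Y - FF X| ≤ K * r := by
  classical
  rcases Classical.em (∃ t : ℕ × ℕ, t.2 < n t.1 ∧ own X t.1 t.2) with hex | hex
  · obtain ⟨⟨j0, i0⟩, hi0, hown0⟩ := hex
    have hp0 := pp_pos j0
    have hd0 := dd_pos j0
    set L0 : ℝ := 8 * dd j0 / pp j0 with hL0def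
    have hL0 : 0 < L0 := by rw [hL0def]; positivity
    refine ⟨84 + L0, by linarith, ?_⟩
    intro ε hε
    obtain ⟨r, hr0, hrε, hgood⟩ := good_radius X hε
    refine ⟨r, hr0, hrε, ?_⟩
    intro Y hY
    have hXY := abs_le.mp hY
    -- plateau Lipschitz bound helper
    have hplat : ∀ z1 z2, SS j0 i0 ≤ z1 → z1 ≤ SS j0 i0 + pp j0 →
        SS j0 i0 ≤ z2 → z2 ≤ SS j0 i0 + pp j0 →
        |FF z1 - FF z2| ≤ L0 * |z1 - z2| := by
      intro z1 z2 a1 a2 a3 a4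
      rw [FF_plateau' hi0 a1 a2, FF_plateau' hi0 a3 a4,
        show cc j0 i0 + Wt j0 i0 z1 - (cc j0 i0 + Wt j0 i0 z2) = Wt j0 i0 z1 - Wt j0 i0 z2 by ring]
      exact Wt_lip hi0 z1 z2
    by_cases hYin : SS j0 i0 ≤ Y ∧ Y ≤ SS j0 i0 + pp j0
    · have := hplat Y X hYin.1 hYin.2 hown0.1 hown0.2
      calc |FF Y - FF X| ≤ L0 * |Y - X| := this
        _ ≤ L0 * r := by nlinarith
        _ ≤ (84 + L0) * r := by nlinarith
    · -- Y outside the own plateau: go through the boundary point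
      have hcases : Y < SS j0 i0 ∨ SS j0 i0 + pp j0 < Y := by
        by_contra hc
        push_neg at hc
        exact hYin ⟨hc.1, hc.2⟩
      set B : ℝ := if Y < SS j0 i0 then SS j0 i0 else SS j0 i0 + pp j0 with hB
      have hBin : SS j0 i0 ≤ B ∧ B ≤ SS j0 i0 + pp j0 := by
        rw [hB]
        by_cases h : Y < SS j0 i0
        · rw [if_pos h]; exact ⟨le_refl _, by linarith⟩
        · rw [if_neg h]; exact ⟨by linarith, le_refl _⟩
      have hBX : |B - X| ≤ r := by
        rw [hB]
        rcases hcases with h | h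
        · rw [if_pos h, abs_le]
          constructor
          · linarith [hown0.1, hown0.2, hXY.1, hXY.2]
          · linarith [hown0.1, hown0.2, hXY.1, hXY.2]
        · rw [if_neg (by linarith), abs_le]
          constructor
          · linarith [hown0.1, hown0.2, hXY.1, hXY.2]
          · linarith [hown0.1, hown0.2, hXY.1, hXY.2]
      have hBY : |B - Y| ≤ |Y - X| := by
        rw [hB]
        rcases hcases with h | h
        · rw [if_pos h, abs_le]
          constructor
          · linarith [hown0.1, abs_nonneg (Y - X), hXY.1, le_abs_self (Y-X), neg_abs_le (Y-X)]
          · linarith [hown0.1, neg_abs_le (Y - X)]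
        · rw [if_neg (by linarith), abs_le]
          constructor
          · linarith [hown0.2, le_abs_self (Y - X)]
          · linarith [hown0.2, le_abs_self (Y - X)]
      have hBnoopen : ∀ j i, i < n j → ¬(SS j i < B ∧ B < SS j i + pp j) := by
        intro j i hni
        by_cases he : (j0, i0) = (j, i)
        · rw [Prod.mk.injEq] at he
          rw [← he.1, ← he.2, hB]
          by_cases h : Y < SS j0 i0
          · rw [if_pos h]
            intro hc
            exact lt_irrefl _ hc.1
          · rw [if_neg h]
            intro hc
            exact lt_irrefl _ hc.2
        · exact open_disjoint hi0 hni (by exact he) hBin.1 hBin.2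
      have hQX : ∀ j i, i < n j → (SS j i < Y ∧ Y < SS j i + pp j) → ¬ own X j i := by
        intro j i hni hYopen hownX
        have := own_unique hni hi0 hownX hown0
        rw [Prod.mk.injEq] at this
        obtain ⟨e1, e2⟩ := this
        subst e1; subst e2
        rcases hcases with h | h
        · exact absurd hYopen.1 (by linarith)
        · exact absurd hYopen.2 (by linarith)
      have hcore := FF_osc_core hr0 hgood hBX hY hBnoopen hQX
      have hlip := hplat B X hBin.1 hBin.2 hown0.1 hown0.2
      calc |FF Y - FF X| ≤ |FF Y - FF B| + |FF B - FF X| := abs_sub_le _ _ _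
        _ ≤ 84 * r + L0 * |B - X| := by linarith
        _ ≤ 84 * r + L0 * r := by nlinarith
        _ = (84 + L0) * r := by ring
  · -- no own plateau at all
    push_neg at hex
    refine ⟨84, by norm_num, ?_⟩
    intro ε hε
    obtain ⟨r, hr0, hrε, hgood⟩ := good_radius X hε
    refine ⟨r, hr0, hrε, ?_⟩
    intro Y hY
    have hXno : ∀ j i, i < n j → ¬(SS j i < X ∧ X < SS j i + pp j) := by
      intro j i hni hc
      exact hex (j, i) hni ⟨le_of_lt hc.1, le_of_lt hc.2⟩
    have hQX : ∀ j i, i < n j → (SS j i < Y ∧ Y < SS j i + pp j) → ¬ own X j i := by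
      intro j i hni _ hownX
      exact hex (j, i) hni hownX
    have := FF_osc_core hr0 hgood (by rw [sub_self, abs_zero]; linarith) hY hXno hQX
    linarith

/-- clamp is 1-Lipschitz -/
lemma clamp_lip (a b : ℝ) : |max 0 (min 1 a) - max 0 (min 1 b)| ≤ |a - b| := by
  have h1 := abs_max_sub_max_le_abs (min 1 a) (min 1 b) 0
  rw [max_comm (min 1 a), max_comm (min 1 b)] at h1
  apply le_trans h1
  have h2 := abs_min_sub_min_le_max (1:ℝ) a 1 b
  rw [sub_self, abs_zero] at h2
  apply le_trans h2
  rw [max_le_iff]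
  exact ⟨abs_nonneg _, le_refl _⟩

/-- final 1-D oscillation property of f1 -/
lemma f1_osc (u : ℝ) :
    ∃ K, 0 < K ∧ ∀ ε : ℝ, 0 < ε → ∃ r, 0 < r ∧ r < ε ∧
      ∀ v : ℝ, |v - u| ≤ r → |f1 v - f1 u| ≤ K * r := by
  obtain ⟨K, hK, hprop⟩ := FF_osc (2 * u)
  refine ⟨2 * K, by linarith, ?_⟩
  intro ε hε
  obtain ⟨r', hr'0, hr'ε, hr'⟩ := hprop (2 * ε) (by linarith)
  refine ⟨r' / 2, by linarith, by linarith, ?_⟩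
  intro v hv
  have h2v : |2 * v - 2 * u| ≤ r' := by
    rw [show (2:ℝ) * v - 2 * u = 2 * (v - u) by ring, abs_mul, abs_of_pos (show (0:ℝ) < 2 by norm_num)]
    linarith
  have := hr' (2 * v) h2v
  unfold f1
  calc |max 0 (min 1 (FF (2 * v))) - max 0 (min 1 (FF (2 * u)))|
      ≤ |FF (2 * v) - FF (2 * u)| := clamp_lip _ _
    _ ≤ K * r' := this
    _ = 2 * K * (r' / 2) := by ring

end SO

namespace SO
lemma f1_mem (u : ℝ) : 0 ≤ f1 u ∧ f1 u ≤ 1 := by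
  unfold f1
  exact ⟨le_max_left _ _, max_le (by norm_num) (min_le_left _ _)⟩
end SO


open SO in
/-- For every `m = k ≥ 1` there is a continuous `f : [0,1]^m → [0,1]^k` with finite
lower-scaled oscillation at every point, all of whose level sets are infinite. -/
theorem stmt2 (m k : ℕ) (hm : 1 ≤ m) (hmk : m = k) :
    ∃ f : (Fin m → ℝ) → (Fin k → ℝ),
      ContinuousOn f (Set.Icc 0 1) ∧
      Set.MapsTo f (Set.Icc 0 1) (Set.Icc 0 1) ∧
      (∀ x ∈ Set.Icc (0 : Fin m → ℝ) 1, lowerScaledOsc (Set.Icc 0 1) f x < ⊤) ∧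
      (∀ y ∈ Set.Icc (0 : Fin k → ℝ) 1,
        (Set.Icc (0 : Fin m → ℝ) 1 ∩ f ⁻¹' {y}).Infinite) := by
  subst hmk
  classical
  set i0 : Fin m := ⟨0, hm⟩ with hi0
  set f : (Fin m → ℝ) → (Fin m → ℝ) :=
    fun x i => if i = i0 then f1 (x i0) else x i with hf
  have hcont : Continuous f := by
    apply continuous_pi
    intro i
    by_cases h : i = i0
    · simp only [hf, if_pos h]
      exact cont_f1.comp (continuous_apply i0)
    · simp only [hf, if_neg h]
      exact continuous_apply i
  have hmem_iff : ∀ z : Fin m → ℝ, z ∈ Set.Icc (0 : Fin m → ℝ) 1 ↔ ∀ i, z i ∈ Icc (0:ℝ) 1 := by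
    intro z
    constructor
    · intro hz i
      exact ⟨hz.1 i, hz.2 i⟩
    · intro hz
      exact ⟨fun i => (hz i).1, fun i => (hz i).2⟩
  refine ⟨f, hcont.continuousOn, ?_, ?_, ?_⟩
  · -- MapsTo
    intro x hx
    rw [hmem_iff] at *
    intro i
    by_cases h : i = i0
    · simp only [hf, if_pos h]
      exact ⟨(f1_mem (x i0)).1, (f1_mem (x i0)).2⟩
    · simp only [hf, if_neg h]
      exact hx i
  · -- liminf finite
    intro x hx
    obtain ⟨K, hK, hprop⟩ := f1_osc (x i0)
    set C : ℝ := max K 1 with hC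
    have hC1 : (1:ℝ) ≤ C := le_max_right _ _
    have hC0 : (0:ℝ) ≤ C := by linarith
    have hfreq : ∃ᶠ r in nhdsWithin (0:ℝ) (Set.Ioi 0),
        (⨆ (y : Fin m → ℝ) (_ : y ∈ Set.Icc 0 1) (_ : dist y x ≤ r),
          ENNReal.ofReal (dist (f y) (f x))) / ENNReal.ofReal r ≤ ENNReal.ofReal C := by
      rw [Filter.frequently_iff]
      intro U hU
      obtain ⟨a, ha, haU⟩ := mem_nhdsGT_iff_exists_Ioo_subset.mp hU
      obtain ⟨r, hr0, hra, hr⟩ := hprop (min a 1) (lt_min (mem_Ioi.mp ha) one_pos)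
      refine ⟨r, haU ⟨hr0, lt_of_lt_of_le hra (min_le_left _ _)⟩, ?_⟩
      have hsup : (⨆ (y : Fin m → ℝ) (_ : y ∈ Set.Icc 0 1) (_ : dist y x ≤ r),
          ENNReal.ofReal (dist (f y) (f x))) ≤ ENNReal.ofReal (C * r) := by
        apply iSup_le
        intro y
        apply iSup_le
        intro hy
        apply iSup_le
        intro hdy
        apply ENNReal.ofReal_le_ofReal
        rw [dist_pi_le_iff (by positivity)]
        intro b
        have hb : dist (y b) (x b) ≤ r := le_trans (dist_le_pi_dist y x b) hdy
        by_cases h : b = i0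
        · simp only [hf, if_pos h]
          have : |y i0 - x i0| ≤ r := by
            rw [← Real.dist_eq]
            exact le_trans (dist_le_pi_dist y x i0) hdy
          have := hr (y i0) this
          rw [Real.dist_eq]
          calc |f1 (y i0) - f1 (x i0)| ≤ K * r := this
            _ ≤ C * r := by
                apply mul_le_mul_of_nonneg_right (le_max_left _ _) (le_of_lt hr0)
        · simp only [hf, if_neg h]
          calc dist (y b) (x b) ≤ r := hb
            _ ≤ C * r := by nlinarith
      calc (⨆ (y : Fin m → ℝ) (_ : y ∈ Set.Icc 0 1) (_ : dist y x ≤ r),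
          ENNReal.ofReal (dist (f y) (f x))) / ENNReal.ofReal r
          ≤ ENNReal.ofReal (C * r) / ENNReal.ofReal r := by
            exact ENNReal.div_le_div_right hsup _
        _ = ENNReal.ofReal C * ENNReal.ofReal r / ENNReal.ofReal r := by
            rw [ENNReal.ofReal_mul hC0]
        _ = ENNReal.ofReal C := by
            rw [div_eq_mul_inv, mul_assoc, ENNReal.mul_inv_cancel (by
              simp only [ne_eq, ENNReal.ofReal_eq_zero, not_le]; exact hr0) ENNReal.ofReal_ne_top,
              mul_one]
    have hliminf := Filter.liminf_le_of_frequently_le hfreq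
    unfold lowerScaledOsc
    exact lt_of_le_of_lt hliminf ENNReal.ofReal_lt_top
  · -- fibers infinite
    intro y hy
    have hy0 : y i0 ∈ Icc (0:ℝ) 1 := ⟨hy.1 i0, hy.2 i0⟩
    have hS := f1_fiber_infinite hy0
    set g : ℝ → (Fin m → ℝ) := fun u => Function.update y i0 u with hg
    have hinj : Function.Injective g := by
      intro a b hab
      have := congrFun hab i0
      simpa only [hg, Function.update_self] using this
    apply Set.Infinite.mono (s := g '' {u : ℝ | u ∈ Icc (0:ℝ) 1 ∧ f1 u = y i0})
    · intro z hz
      obtain ⟨u, hu, rfl⟩ := hz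
      constructor
      · rw [hmem_iff]
        intro i
        by_cases h : i = i0
        · subst h
          simp only [hg, Function.update_self]
          exact hu.1
        · simp only [hg, Function.update_of_ne h]
          exact ⟨hy.1 i, hy.2 i⟩
      · simp only [Set.mem_preimage, Set.mem_singleton_iff]
        funext i
        by_cases h : i = i0
        · subst h
          simp only [hf, if_pos rfl, hg, Function.update_self]
          exact hu.2
        · simp only [hf, if_neg h, hg, Function.update_of_ne h]
    · exact hS.image (hinj.injOn)
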